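/- arXiv:1311.3762 — 7 statements merged into one kernel-verified Lean document; each statement's English description precedes it below -/
import Mathlib

section
/- Let (M, M') be a matroid perspective on a finite set E and e ∈ E an element that is neither an isthmus nor a loop of M. Then T_{M→M'}(x,y,z) = T_{M\e → M'\e}(x,y,z) + T_{M/e → M'/e}(x,y,z). -/
open Finset

/-- The Tutte polynomial of a matroid perspective, as a sum over subsets. -/
noncomputable def Tpersp {α : Type*} [DecidableEq α] (E : Finset α)
    (r r' : Finset α → ℤ) (x y z : ℝ) : ℝ :=
  ∑ X ∈ E.powerset,
    (x - 1) ^ (r' E - r' X) * (y - 1) ^ ((X.card : ℤ) - r X) *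
      z ^ ((r E - r X) - (r' E - r' X))

/-- Deletion-contraction for an element that is neither an isthmus nor a loop of `M`. -/
theorem Tpersp_delete_contract {α : Type*} [DecidableEq α] (E : Finset α)
    (r r' : Finset α → ℤ)
    (hr0 : r ∅ = 0) (hr0' : r' ∅ = 0)
    (hr1 : ∀ A ⊆ E, ∀ a ∈ E, r (insert a A) = r A ∨ r (insert a A) = r A + 1)
    (hr1' : ∀ A ⊆ E, ∀ a ∈ E, r' (insert a A) = r' A ∨ r' (insert a A) = r' A + 1)
    (hr2 : ∀ A ⊆ E, ∀ a ∈ E, ∀ b ∈ E, r A = r (insert a A) → r A = r (insert b A) →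
      r (insert b (insert a A)) = r A)
    (hr2' : ∀ A ⊆ E, ∀ a ∈ E, ∀ b ∈ E, r' A = r' (insert a A) → r' A = r' (insert b A) →
      r' (insert b (insert a A)) = r' A)
    (hpersp : ∀ A B : Finset α, A ⊆ B → B ⊆ E → r B - r A ≥ r' B - r' A)
    (e : α) (he : e ∈ E)
    (hnotloop : r {e} ≠ 0)
    (hnotisthmus : ¬ (∀ A ⊆ E.erase e, r (insert e A) = r A + 1))
    (x y z : ℝ) :
    Tpersp E r r' x y z =
      Tpersp (E.erase e) r r' x y z +
      Tpersp (E.erase e) (fun A => r (insert e A) - r {e})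
        (fun A => r' (insert e A) - r' {e}) x y z := by
  classical
  have heE : insert e (E.erase e) = E := Finset.insert_erase he
  have hE' : E.erase e ⊆ E := Finset.erase_subset _ _
  have heE' : e ∉ E.erase e := Finset.notMem_erase e E
  -- r {e} = 1
  have hre : r {e} = 1 := by
    have h := hr1 ∅ (Finset.empty_subset E) e he
    rw [Finset.insert_empty, hr0] at h
    rcases h with h | h
    · exact absurd h hnotloop
    · omega
  push_neg at hnotisthmus
  obtain ⟨A, hA, hAne⟩ := hnotisthmus
  have hAE : A ⊆ E := hA.trans hE'
  have hAe : r (insert e A) = r A := by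
    rcases hr1 A hAE e he with h | h
    · exact h
    · exact absurd h hAne
  have key : ∀ B ⊆ E.erase e, r (insert e (A ∪ B)) = r (A ∪ B) := by
    intro B
    induction B using Finset.induction_on with
    | empty => intro _; simpa using hAe
    | @insert b B hb ih =>
      intro hsub
      have hbE : b ∈ E := hE' (hsub (Finset.mem_insert_self _ _))
      have hBsub : B ⊆ E.erase e := fun u hu => hsub (Finset.mem_insert_of_mem hu)
      have ihC := ih hBsub
      set C := A ∪ B with hCdef
      have hC : C ⊆ E := Finset.union_subset hAE (hBsub.trans hE')
      have hgoal : A ∪ insert b B = insert b C := by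
        rw [Finset.union_insert]
      rw [hgoal]
      have hcomm : insert b (insert e C) = insert e (insert b C) := Finset.insert_comm b e C
      rcases hr1 C hC b hbE with h1 | h1
      · have h2 := hr2 C hC e he b hbE ihC.symm h1.symm
        rw [hcomm] at h2
        omega
      · have h2 := hr1 (insert e C) (Finset.insert_subset he hC) b hbE
        have h3 := hr1 (insert b C) (Finset.insert_subset hbE hC) e he
        rw [hcomm] at h2
        omega
  have hEr : r (E.erase e) = r E := by
    have h := key (E.erase e) (Finset.Subset.refl _)
    rw [Finset.union_eq_right.mpr hA, heE] at h
    exact h.symm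
  have hEr' : r' (E.erase e) = r' E := by
    have h1 := hpersp (E.erase e) E hE' (Finset.Subset.refl _)
    have h2 := hr1' (E.erase e) hE' e he
    rw [heE] at h2
    omega
  set f : Finset α → ℝ := fun X =>
    (x - 1) ^ (r' E - r' X) * (y - 1) ^ ((X.card : ℤ) - r X) *
      z ^ ((r E - r X) - (r' E - r' X)) with hf
  have split := Finset.sum_powerset_insert heE' f
  rw [heE] at split
  have lhs_eq : Tpersp E r r' x y z = ∑ X ∈ E.powerset, f X := rfl
  rw [lhs_eq, split]
  congr 1
  · refine Finset.sum_congr rfl fun X hX => ?_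
    simp only [hf, Tpersp]
    rw [hEr, hEr']
  · refine Finset.sum_congr rfl fun X hX => ?_
    have heX : e ∉ X := fun h => heE' (Finset.mem_powerset.mp hX h)
    have hcard : ((insert e X).card : ℤ) = (X.card : ℤ) + 1 := by
      rw [Finset.card_insert_of_notMem heX]; push_cast; ring
    simp only [hf]
    show (x - 1) ^ (r' E - r' (insert e X)) *
        (y - 1) ^ (((insert e X).card : ℤ) - r (insert e X)) *
        z ^ ((r E - r (insert e X)) - (r' E - r' (insert e X))) =
      (x - 1) ^ ((r' (insert e (E.erase e)) - r' {e}) - (r' (insert e X) - r' {e})) *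
        (y - 1) ^ ((X.card : ℤ) - (r (insert e X) - r {e})) *
        z ^ (((r (insert e (E.erase e)) - r {e}) - (r (insert e X) - r {e})) -
          ((r' (insert e (E.erase e)) - r' {e}) - (r' (insert e X) - r' {e})))
    rw [heE, hcard]
    have e1 : r' E - r' (insert e X) = (r' E - r' {e}) - (r' (insert e X) - r' {e}) := by ring
    have e2 : (X.card : ℤ) + 1 - r (insert e X) =
        (X.card : ℤ) - (r (insert e X) - r {e}) := by omega
    have e3 : (r E - r (insert e X)) - (r' E - r' (insert e X)) =
        ((r E - r {e}) - (r (insert e X) - r {e})) -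
          ((r' E - r' {e}) - (r' (insert e X) - r' {e})) := by ring
    rw [e3, e1, e2]
end

section
/- Let (M, M') be a matroid perspective on a finite set E and e ∈ E an isthmus of M' (and hence of M). Then T_{M→M'}(x,y,z) = x · T_{M\e → M'\e}(x,y,z). -/
open Finset

private lemma zpow_succ_aux (a : ℝ) (m : ℤ) (hm : 0 ≤ m) :
    a ^ (m + 1) = a * a ^ m := by
  rcases eq_or_ne a 0 with rfl | ha
  · rw [zero_zpow _ (by omega), zero_mul]
  · rw [zpow_add_one₀ ha, mul_comm]

/-- If `e` is an isthmus of `M'` (hence of `M`), then `T = x · T_{delete}`. -/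
theorem Tpersp_isthmus {α : Type*} [DecidableEq α] (E : Finset α)
    (r r' : Finset α → ℤ)
    (hr0 : r ∅ = 0) (hr0' : r' ∅ = 0)
    (hr1 : ∀ A ⊆ E, ∀ a ∈ E, r (insert a A) = r A ∨ r (insert a A) = r A + 1)
    (hr1' : ∀ A ⊆ E, ∀ a ∈ E, r' (insert a A) = r' A ∨ r' (insert a A) = r' A + 1)
    (hr2 : ∀ A ⊆ E, ∀ a ∈ E, ∀ b ∈ E, r A = r (insert a A) → r A = r (insert b A) →
      r (insert b (insert a A)) = r A)
    (hr2' : ∀ A ⊆ E, ∀ a ∈ E, ∀ b ∈ E, r' A = r' (insert a A) → r' A = r' (insert b A) →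
      r' (insert b (insert a A)) = r' A)
    (hpersp : ∀ A B : Finset α, A ⊆ B → B ⊆ E → r B - r A ≥ r' B - r' A)
    (e : α) (he : e ∈ E)
    (histhmus' : ∀ A ⊆ E.erase e, r' (insert e A) = r' A + 1)
    (x y z : ℝ) :
    Tpersp E r r' x y z = x * Tpersp (E.erase e) r r' x y z := by
  set E' := E.erase e with hE'
  have heE' : e ∉ E' := Finset.notMem_erase e E
  have hEins : insert e E' = E := Finset.insert_erase he
  have hE'sub : E' ⊆ E := Finset.erase_subset e E
  -- e is also an isthmus of M
  have histhmus : ∀ A ⊆ E', r (insert e A) = r A + 1 := by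
    intro A hA
    have hAE : A ⊆ E := hA.trans hE'sub
    have h1 := hr1 A hAE e he
    have h2 := hpersp A (insert e A) (Finset.subset_insert e A)
      (Finset.insert_subset he hAE)
    have h3 := histhmus' A hA
    omega
  -- monotonicity of r'
  have hmono : ∀ S : Finset α, S ⊆ E → ∀ A ⊆ E, r' A ≤ r' (A ∪ S) := by
    intro S
    induction S using Finset.induction_on with
    | empty => intro _ A _; simp
    | @insert a S _ ih =>
      intro hS A hA
      have haE : a ∈ E := hS (Finset.mem_insert_self a S)
      have hSE : S ⊆ E := fun t ht => hS (Finset.mem_insert_of_mem ht)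
      have h1 := ih hSE A hA
      have h2 := hr1' (A ∪ S) (Finset.union_subset hA hSE) a haE
      rw [Finset.union_insert]
      omega
  have hmono' : ∀ X ⊆ E', r' X ≤ r' E' := by
    intro X hX
    have h1 := hmono (E' \ X) ((Finset.sdiff_subset).trans hE'sub) X (hX.trans hE'sub)
    rwa [Finset.union_sdiff_of_subset hX] at h1
  have hrEi : r (insert e E') = r E' + 1 := histhmus E' subset_rfl
  have hr'Ei : r' (insert e E') = r' E' + 1 := histhmus' E' subset_rfl
  unfold Tpersp
  rw [← hEins, Finset.sum_powerset_insert heE', ← Finset.sum_add_distrib,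
    Finset.mul_sum]
  apply Finset.sum_congr rfl
  intro X hX
  have hXE' : X ⊆ E' := Finset.mem_powerset.mp hX
  have heX : e ∉ X := fun h => heE' (hXE' h)
  have hcard : ((insert e X).card : ℤ) = (X.card : ℤ) + 1 := by
    rw [Finset.card_insert_of_notMem heX]; push_cast; ring
  have hrX : r (insert e X) = r X + 1 := histhmus X hXE'
  have hr'X : r' (insert e X) = r' X + 1 := histhmus' X hXE'
  have hm : 0 ≤ r' E' - r' X := by have := hmono' X hXE'; omega
  rw [hrX, hr'X, hcard, hrEi, hr'Ei,
    show r' E' + 1 - r' X = (r' E' - r' X) + 1 from by ring,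
    show r' E' + 1 - (r' X + 1) = r' E' - r' X from by ring,
    show (X.card : ℤ) + 1 - (r X + 1) = (X.card : ℤ) - r X from by ring,
    show r E' + 1 - r X - ((r' E' - r' X) + 1) = (r E' - r X) - (r' E' - r' X) from by ring,
    show r E' + 1 - (r X + 1) - (r' E' - r' X) = (r E' - r X) - (r' E' - r' X) from by ring,
    zpow_succ_aux _ _ hm]
  ring
end

section
/- Let (M, M') be a matroid perspective on a finite set E and e ∈ E an isthmus of M that is not an isthmus of M'. Then T_{M→M'}(x,y,z) = z · T_{M\e → M'\e}(x,y,z) + T_{M/e → M'/e}(x,y,z). -/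
open Finset

private lemma zpow_succ_of_nonneg (z : ℝ) {k : ℤ} (hk : 0 ≤ k) :
    z ^ (k + 1) = z * z ^ k := by
  obtain ⟨n, rfl⟩ := Int.eq_ofNat_of_zero_le hk
  rw [show ((n : ℤ) + 1) = ((n + 1 : ℕ) : ℤ) by push_cast; ring, zpow_natCast, zpow_natCast,
    pow_succ]
  ring

/-- If `e` is an isthmus of `M` but not of `M'`, then `T = z · T_{delete} + T_{contract}`. -/
theorem Tpersp_isthmus_not_isthmus {α : Type*} [DecidableEq α] (E : Finset α)
    (r r' : Finset α → ℤ)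
    (hr0 : r ∅ = 0) (hr0' : r' ∅ = 0)
    (hr1 : ∀ A ⊆ E, ∀ a ∈ E, r (insert a A) = r A ∨ r (insert a A) = r A + 1)
    (hr1' : ∀ A ⊆ E, ∀ a ∈ E, r' (insert a A) = r' A ∨ r' (insert a A) = r' A + 1)
    (hr2 : ∀ A ⊆ E, ∀ a ∈ E, ∀ b ∈ E, r A = r (insert a A) → r A = r (insert b A) →
      r (insert b (insert a A)) = r A)
    (hr2' : ∀ A ⊆ E, ∀ a ∈ E, ∀ b ∈ E, r' A = r' (insert a A) → r' A = r' (insert b A) →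
      r' (insert b (insert a A)) = r' A)
    (hpersp : ∀ A B : Finset α, A ⊆ B → B ⊆ E → r B - r A ≥ r' B - r' A)
    (e : α) (he : e ∈ E)
    (histhmus : ∀ A ⊆ E.erase e, r (insert e A) = r A + 1)
    (hnotisthmus' : ¬ (∀ A ⊆ E.erase e, r' (insert e A) = r' A + 1))
    (x y z : ℝ) :
    Tpersp E r r' x y z =
      z * Tpersp (E.erase e) r r' x y z +
      Tpersp (E.erase e) (fun A => r (insert e A) - r {e})
        (fun A => r' (insert e A) - r' {e}) x y z := by
  classical
  have hEe : insert e (E.erase e) = E := insert_erase he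
  have hEsub : E.erase e ⊆ E := erase_subset e E
  have re1 : r {e} = 1 := by
    have := histhmus ∅ (empty_subset _)
    simpa [hr0] using this
  have rE : r E = r (E.erase e) + 1 := by
    have := histhmus (E.erase e) (Subset.refl _)
    rwa [hEe] at this
  -- get a witness set where adding e does not raise r'
  push_neg at hnotisthmus'
  obtain ⟨A, hA, hAne⟩ := hnotisthmus'
  have hA0 : r' (insert e A) = r' A := by
    rcases hr1' A (hA.trans hEsub) e he with h | h
    · exact h
    · exact absurd h hAne
  have key : ∀ C : Finset α, C ⊆ E.erase e → r' (insert e (A ∪ C)) = r' (A ∪ C) := by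
    intro C
    induction C using Finset.induction_on with
    | empty => intro _; simpa using hA0
    | @insert b C hb ih =>
      intro hsub
      have hbE : b ∈ E := hEsub (hsub (mem_insert_self b C))
      have hC : C ⊆ E.erase e := (subset_insert b C).trans hsub
      have ihC := ih hC
      have hDE : A ∪ C ⊆ E := union_subset (hA.trans hEsub) (hC.trans hEsub)
      have hgoal : r' (insert e (insert b (A ∪ C))) = r' (insert b (A ∪ C)) := by
        rcases hr1' (A ∪ C) hDE b hbE with h | h
        · have h2 := hr2' (A ∪ C) hDE e he b hbE ihC.symm h.symm
          rw [Finset.insert_comm] at h2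
          omega
        · rcases hr1' (insert b (A ∪ C)) (insert_subset hbE hDE) e he with h2 | h2
          · exact h2
          · exfalso
            have hcomm : insert b (insert e (A ∪ C)) = insert e (insert b (A ∪ C)) :=
              Finset.insert_comm _ _ _
            rcases hr1' (insert e (A ∪ C)) (insert_subset he hDE) b hbE with h3 | h3 <;>
              rw [hcomm] at h3 <;> omega
      rw [union_insert]
      exact hgoal
  have r'E : r' E = r' (E.erase e) := by
    have := key (E.erase e) (Subset.refl _)
    rwa [union_eq_right.mpr hA, hEe] at this
  unfold Tpersp
  rw [← hEe, Finset.sum_powerset_insert (notMem_erase e E), hEe, mul_sum]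
  congr 1
  · apply Finset.sum_congr rfl
    intro X hX
    have hXsub : X ⊆ E.erase e := mem_powerset.mp hX
    have hk : 0 ≤ (r (E.erase e) - r X) - (r' (E.erase e) - r' X) := by
      have := hpersp X (E.erase e) hXsub hEsub
      omega
    rw [rE, r'E, show (r (E.erase e) + 1 - r X) - (r' (E.erase e) - r' X)
        = ((r (E.erase e) - r X) - (r' (E.erase e) - r' X)) + 1 by ring,
      zpow_succ_of_nonneg z hk]
    ring
  · apply Finset.sum_congr rfl
    intro X hX
    have hXsub : X ⊆ E.erase e := mem_powerset.mp hX
    have hXe : e ∉ X := fun h => notMem_erase e E (hXsub h)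
    simp only [hEe, re1, card_insert_of_notMem hXe]
    congr 1
    · congr 1
      · ring
      · push_cast; ring
    · ring_nf
end

section
/- Let E be a finite set, ρ : P(E) → ℕ a 'region-count' function and c : P(E) → ℕ a 'component-count' function of a graph on edge sets, such that for all A ⊆ E and e ∉ A: if c(A) − c(A ∪ {e}) = 1 then ρ(A ∪ {e}) = ρ(A). Then the function r(A) := |A| − ρ(A) + ρ(∅), together with the cycle-matroid rank function r'(A) := v − c(A) (v a constant), satisfies the matroid perspective inequality r(B) − r(A) ≥ r'(B) − r'(A) for all A ⊆ B ⊆ E, provided r and r' are matroid rank functions. -/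
/-- The bond matroid of `G†` together with the cycle matroid of `G` forms a matroid
perspective: the perspective inequality holds for the rank functions
`r(A) = |A| − ρ(A) + ρ(∅)` and `r'(A) = v − c(A)`. -/
theorem dagger_perspective {α : Type*} [DecidableEq α] (E : Finset α) (v : ℤ)
    (ρ c : Finset α → ℕ)
    (hρstep : ∀ A ⊆ E, ∀ e ∈ E, e ∉ A → ρ (insert e A) = ρ A ∨ ρ (insert e A) = ρ A + 1)
    (hcstep : ∀ A ⊆ E, ∀ e ∈ E, e ∉ A → c (insert e A) = c A ∨ c A = c (insert e A) + 1)
    (hbridge : ∀ A ⊆ E, ∀ e ∈ E, e ∉ A → c A = c (insert e A) + 1 → ρ (insert e A) = ρ A) :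
    ∀ A B : Finset α, A ⊆ B → B ⊆ E →
      ((B.card : ℤ) - (ρ B : ℤ) + (ρ ∅ : ℤ)) - ((A.card : ℤ) - (ρ A : ℤ) + (ρ ∅ : ℤ)) ≥
      (v - (c B : ℤ)) - (v - (c A : ℤ)) := by
  have key : ∀ S : Finset α, ∀ A : Finset α, Disjoint S A → A ∪ S ⊆ E →
      ((A ∪ S).card : ℤ) - (ρ (A ∪ S) : ℤ) - ((A.card : ℤ) - (ρ A : ℤ)) ≥
      (c A : ℤ) - (c (A ∪ S) : ℤ) := by
    intro S
    induction S using Finset.induction_on with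
    | empty => intro A _ _; simp
    | @insert e S heS ih =>
      intro A hdis hsub
      have heA : e ∉ A := by
        have := Finset.disjoint_left.mp hdis (Finset.mem_insert_self e S)
        exact this
      have heAS : e ∉ A ∪ S := by
        simp only [Finset.mem_union]
        rintro (h | h)
        · exact heA h
        · exact heS h
      have hASE : A ∪ S ⊆ E := fun x hx => hsub (by
        simp only [Finset.mem_union, Finset.mem_insert] at hx ⊢; tauto)
      have heE : e ∈ E := hsub (by simp)
      have hdis' : Disjoint S A := Finset.disjoint_of_subset_left (Finset.subset_insert e S) hdis
      have h1 := ih A hdis' hASE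
      have hstep : ((insert e (A ∪ S)).card : ℤ) - (ρ (insert e (A ∪ S)) : ℤ)
          - (((A ∪ S).card : ℤ) - (ρ (A ∪ S) : ℤ)) ≥
          (c (A ∪ S) : ℤ) - (c (insert e (A ∪ S)) : ℤ) := by
        have hcard : (insert e (A ∪ S)).card = (A ∪ S).card + 1 :=
          Finset.card_insert_of_notMem heAS
        rcases hcstep (A ∪ S) hASE e heE heAS with hc | hc
        · rcases hρstep (A ∪ S) hASE e heE heAS with hr | hr <;>
            push_cast [hcard, hc, hr] <;> linarith
        · have hr := hbridge (A ∪ S) hASE e heE heAS hc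
          push_cast [hcard, hc, hr]; linarith
      have heq : A ∪ insert e S = insert e (A ∪ S) := Finset.union_insert e A S
      rw [heq]
      linarith
  intro A B hAB hBE
  have hdis : Disjoint (B \ A) A := Finset.sdiff_disjoint
  have hU : A ∪ (B \ A) = B := Finset.union_sdiff_of_subset hAB
  have := key (B \ A) A hdis (by rw [hU]; exact hBE)
  rw [hU] at this
  linarith
end

section
/- Let G be a ribbon graph and A ⊆ E(G). Suppose the spanning ribbon subgraph G − A^c (edge set A) of G is a quasi-tree, i.e., is connected with exactly one boundary component. Then the complementary spanning ribbon subgraph of the geometric dual, G* − A (edge set A^c), is also a quasi-tree, and moreover γ(G − A^c) + γ(G* − A) = γ(G). -/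
/-- If the spanning ribbon subgraph of `G` on edge set `A` is a quasi-tree, then so is
the complementary spanning ribbon subgraph of the dual `G*` on edge set `Aᶜ`, and
`γ_G(A) + γ_{G*}(Aᶜ) = γ(G)`. -/
theorem quasi_tree_duality {β : Type*} [DecidableEq β] (Edges : Finset β)
    (vG vGd : ℤ) (fG cG γG fGd cGd γGd : Finset β → ℤ)
    (heulerG : ∀ X ⊆ Edges, vG - (X.card : ℤ) + fG X = 2 * cG X - γG X)
    (heulerGd : ∀ X ⊆ Edges, vGd - (X.card : ℤ) + fGd X = 2 * cGd X - γGd X)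
    (hbound : ∀ X ⊆ Edges, fG X = fGd (Edges \ X))
    (hvGd : vGd = fG Edges)
    (hcG : cG Edges = 1)
    (honeface_conn : ∀ X ⊆ Edges, fGd X = 1 → cGd X = 1)
    (A : Finset β) (hA : A ⊆ Edges)
    (hqt_f : fG A = 1) (hqt_c : cG A = 1) :
    (fGd (Edges \ A) = 1 ∧ cGd (Edges \ A) = 1) ∧
      γG A + γGd (Edges \ A) = γG Edges := by
  have hf : fGd (Edges \ A) = 1 := by rw [← hbound A hA]; exact hqt_f
  have hc : cGd (Edges \ A) = 1 := honeface_conn _ (Finset.sdiff_subset) hf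
  refine ⟨⟨hf, hc⟩, ?_⟩
  have h1 := heulerG A hA
  have h2 := heulerGd (Edges \ A) Finset.sdiff_subset
  have h3 := heulerG Edges le_rfl
  have hcard : ((Edges \ A).card : ℤ) = Edges.card - A.card := by
    rw [Finset.card_sdiff_of_subset hA]
    have := Finset.card_le_card hA
    omega
  rw [hqt_f, hqt_c] at h1
  rw [hf, hc, hcard, hvGd] at h2
  rw [hcG] at h3
  linarith
end

section
/- Let G be a cellularly embedded graph in a surface with dual G*, and A ⊆ E(G) with complement A^c. Assuming Euler's formula for all spanning ribbon subgraphs and the facts f_{G*}(A^c) = f_G(A), f(G*) = v(G), c-relations as in ribbon graph duality, the rank function of the bond matroid of the dual satisfies: 2·r_{B(G*)}(A) = 2·r_G(A) + γ(G) + γ_G(A) − γ_{G*}(A^c). -/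
/-- Key computation for rewriting the Las Vergnas polynomial:
`2 r_{B(G*)}(A) = 2 r_G(A) + γ(G) + γ_G(A) − γ_{G*}(Aᶜ)`. -/
theorem bond_rank_topological {β : Type*} [DecidableEq β] (Edges : Finset β)
    (vG vGd : ℤ) (fG cG γG fGd cGd γGd : Finset β → ℤ)
    (heulerG : ∀ X ⊆ Edges, vG - (X.card : ℤ) + fG X = 2 * cG X - γG X)
    (heulerGd : ∀ X ⊆ Edges, vGd - (X.card : ℤ) + fGd X = 2 * cGd X - γGd X)
    (hbound : ∀ X ⊆ Edges, fGd (Edges \ X) = fG X)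
    (hfGd : fGd Edges = vG) (hvGd : vGd = fG Edges) (hc : cGd Edges = cG Edges)
    (A : Finset β) (hA : A ⊆ Edges) :
    2 * ((A.card : ℤ) + (vGd - cGd (Edges \ A)) - (vGd - cGd Edges)) =
      2 * (vG - cG A) + γG Edges + γG A - γGd (Edges \ A) := by
  have h1 := heulerG A hA
  have h2 := heulerG Edges subset_rfl
  have h3 := heulerGd (Edges \ A) (Finset.sdiff_subset)
  have h4 := heulerGd Edges subset_rfl
  have h5 := hbound A hA
  have hcard : ((Edges \ A).card : ℤ) = Edges.card - A.card := by
    rw [Finset.card_sdiff_of_subset hA]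
    have := Finset.card_le_card hA
    omega
  linarith
end

section
/- Let G be a connected graph with dichromatic-type data: for the Bollobás–Riordan polynomial R_G(x,y,z) = Σ_{A⊆E} (x−1)^{r(E)−r(A)} y^{n(A)} z^{γ(A)} of a connected ribbon graph G, the evaluation t·R_G(t+1, t, 1/t) = Σ_{A⊆E(G)} t^{f(A)}, where f(A) is the number of boundary components of the spanning ribbon subgraph (V, A). -/
open Finset

/-- For a connected ribbon graph `G`,
`t · R_G(t+1, t, 1/t) = Σ_{A ⊆ E} t^{f(A)}`. -/
theorem BR_evaluation_boundary {β : Type*} [DecidableEq β] (Edges : Finset β) (v : ℤ)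
    (c f γ : Finset β → ℤ)
    (heuler : ∀ A ⊆ Edges, v - (A.card : ℤ) + f A = 2 * c A - γ A)
    (hconn : c Edges = 1) (t : ℝ) (ht : t ≠ 0) :
    t * ∑ A ∈ Edges.powerset,
        t ^ ((v - 1) - (v - c A)) * t ^ ((A.card : ℤ) - (v - c A)) * (t⁻¹) ^ (γ A) =
    ∑ A ∈ Edges.powerset, t ^ (f A) := by
  rw [mul_sum]
  refine Finset.sum_congr rfl fun A hA => ?_
  have h := heuler A (mem_powerset.mp hA)
  have hf : f A = 1 + ((v - 1) - (v - c A)) + ((A.card : ℤ) - (v - c A)) + (-(γ A)) := by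
    linarith
  rw [hf, inv_zpow, ← zpow_neg, ← zpow_add₀ ht, ← zpow_add₀ ht, ← zpow_one_add₀ ht]
  ring_nf
end
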